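/- The map Mc is a bijection from S_n onto the set of subdiagonal words of length n, and the sum of the letters of Mc σ equals maj σ. -/

import Mathlib

/-- Descent set (ligne of route) of a word, with 1-based positions. -/
def ligne (w : List ℕ) : Finset ℕ :=
  (Finset.Icc 1 (w.length - 1)).filter (fun i => w.getD (i-1) 0 > w.getD i 0)

/-- Major index of a word. -/
def maj (w : List ℕ) : ℕ := ∑ i ∈ ligne w, i

/-- Inversion number of a word. -/
def inv (w : List ℕ) : ℕ :=
  ((Finset.range w.length ×ˢ Finset.range w.length).filter
    (fun p => p.1 < p.2 ∧ w.getD p.1 0 > w.getD p.2 0)).card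

/-- `w` is (the one-line word of) a permutation of `1,…,n`. -/
def IsPermWord (n : ℕ) (w : List ℕ) : Prop := w.Perm (List.range' 1 n)

/-- One-line word of `σ ∈ S_n` with values in `1,…,n`. -/
def toWord {n : ℕ} (σ : Equiv.Perm (Fin n)) : List ℕ := List.ofFn (fun i => (σ i : ℕ) + 1)

/-- Subexcedent word: `0 ≤ d_i ≤ i-1` (1-based), i.e. `d_i ≤ i` for 0-based `i`. -/
def Subexcedent (w : List ℕ) : Prop := ∀ i < w.length, w.getD i 0 ≤ i

/-- Subdiagonal word: `0 ≤ d_i ≤ n-i` (1-based). -/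
def Subdiagonal (w : List ℕ) : Prop := ∀ i < w.length, w.getD i 0 + i + 1 ≤ w.length

/-- Lehmer code: `d_i = #{j < i : x_j > x_i}`. -/
def invcode (w : List ℕ) : List ℕ :=
  (List.range w.length).map (fun i => ((Finset.range i).filter (fun j => w.getD j 0 > w.getD i 0)).card)

/-- `Lc`-code: `d_i = #{j > i : x_i > x_j}`. -/
def lc (w : List ℕ) : List ℕ :=
  (List.range w.length).map (fun i => ((Finset.Ico (i+1) w.length).filter (fun j => w.getD i 0 > w.getD j 0)).card)

/-- Major index code: `d_i = maj(σ|_i) - maj(σ|_{i-1})`, where `σ|_i` erases letters `> i`. -/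
def majcode (w : List ℕ) : List ℕ :=
  (List.range w.length).map (fun i => maj (w.filter (· ≤ i+1)) - maj (w.filter (· ≤ i)))

/-- `Mc`-code: `d_i = maj(σ^{(i)}) - maj(σ^{(i+1)})`, where `σ^{(i)}` erases letters `< i`. -/
def mc (w : List ℕ) : List ℕ :=
  (List.range w.length).map (fun i => maj (w.filter (fun x => i+1 ≤ x)) - maj (w.filter (fun x => i+2 ≤ x)))

/-- One-line word of the inverse permutation. -/
def invWord (w : List ℕ) : List ℕ :=
  (List.range w.length).map (fun i => w.idxOf (i+1) + 1)

/-- `Ic σ = Lc (σ⁻¹)`. -/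
def ic (w : List ℕ) : List ℕ := lc (invWord w)

/-- Inverse ligne of route. -/
def iligne (w : List ℕ) : Finset ℕ := ligne (invWord w)

/-- Complement map `δ` on codes: `δ(d₁⋯d_n) = (0-d₁)(1-d₂)⋯(n-1-d_n)`. -/
def deltaC (w : List ℕ) : List ℕ :=
  (List.range w.length).map (fun i => i - w.getD i 0)

/-- Nondecreasing rearrangement of a word. -/
def sortW (w : List ℕ) : List ℕ := List.insertionSort (· ≤ ·) w

/-- Set-valued statistic `El = Ligne ∘ Mc⁻¹` on subdiagonal words. -/
noncomputable def El (d : List ℕ) : Finset ℕ := by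
  classical
  exact if h : ∃ w, IsPermWord d.length w ∧ mc w = d then ligne h.choose else ∅

/-- Set-valued statistic `Eul = Ligne ∘ Majcode⁻¹` on subexcedent words. -/
noncomputable def Eul (d : List ℕ) : Finset ℕ := by
  classical
  exact if h : ∃ w, IsPermWord d.length w ∧ majcode w = d then ligne h.choose else ∅

section McAux

lemma Icc1 (t : ℕ) : Finset.Icc 1 t = Finset.Ioc 0 t := Finset.Icc_add_one_left_eq_Ioc 0 t

lemma maj_eq (w : List ℕ) :
    maj w = ∑ i ∈ Finset.Ioc 0 (w.length - 1),
      if w.getD (i-1) 0 > w.getD i 0 then i else 0 := by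
  rw [maj, ligne, Finset.sum_filter, Icc1]

lemma getD_mem (u : List ℕ) (j : ℕ) (h : j < u.length) : u.getD j 0 ∈ u := by
  rw [List.getD_eq_getElem u 0 h]; exact List.getElem_mem _

lemma ligne_subset (w : List ℕ) : ligne w ⊆ Finset.Icc 1 (w.length - 1) :=
  Finset.filter_subset _ _

lemma getD_insL (u : List ℕ) (x p : ℕ) (hp : p ≤ u.length) (j : ℕ) :
    (u.take p ++ x :: u.drop p).getD j 0 =
      if j < p then u.getD j 0 else if j = p then x else u.getD (j-1) 0 := by
  have hlt : (u.take p).length = p := by simp [List.length_take]; omega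
  by_cases h1 : j < p
  · rw [List.getD_append _ _ _ _ (by omega)]
    simp [h1, List.getD_eq_getElem?_getD, List.getElem?_take, h1]
  · rw [List.getD_append_right _ _ _ _ (by omega)]
    by_cases h2 : j = p
    · simp [h1, h2, hlt]
    · have : j - (u.take p).length = (j - p - 1) + 1 := by omega
      rw [this]
      simp only [List.getD_cons_succ, h1, h2, if_false]
      rw [List.getD_eq_getElem?_getD, List.getD_eq_getElem?_getD, List.getElem?_drop]
      congr 2
      omega

lemma maj_insL (u : List ℕ) (x p : ℕ) (hp : p ≤ u.length) (hx : ∀ y ∈ u, x < y) :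
    maj (u.take p ++ x :: u.drop p)
      = maj u + (if p ∈ ligne u then 0 else p)
        + ((ligne u).filter (fun j => p < j)).card := by
  classical
  set m := u.length with hm
  set v := u.take p ++ x :: u.drop p with hvdef
  have hvlen : v.length = m + 1 := by
    simp [hvdef, List.length_take, List.length_drop]; omega
  set gu : ℕ → ℕ := fun i => if u.getD (i-1) 0 > u.getD i 0 then i else 0 with hgu
  set gv : ℕ → ℕ := fun i => if v.getD (i-1) 0 > v.getD i 0 then i else 0 with hgv
  have hgetD := getD_insL u x p hp
  have hmaju : maj u = ∑ i ∈ Finset.Ioc 0 (m-1), gu i := maj_eq u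
  have hmajv : maj v = ∑ i ∈ Finset.Ioc 0 m, gv i := by
    rw [maj_eq, hvlen]; simp only [Nat.add_sub_cancel, hgv]
  rcases Nat.eq_zero_or_pos m with hm0 | hm1
  · -- m = 0 : u = [], p = 0
    have hu : u = [] := List.length_eq_zero_iff.mp hm0
    have hp0 : p = 0 := by omega
    subst hu hp0
    norm_num [maj, ligne]
    intro i hi1 hi2 _
    rw [hvlen] at hi2
    omega
  rcases eq_or_lt_of_le hp with hpm | hpm
  · -- p = m : append at the end
    have hnotmem : p ∉ ligne u := by
      intro h
      have := ligne_subset u h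
      simp [Finset.mem_Icc] at this
      omega
    have hK : ((ligne u).filter (fun j => p < j)) = ∅ := by
      apply Finset.filter_eq_empty_iff.mpr
      intro j hj
      have := ligne_subset u hj
      simp [Finset.mem_Icc] at this
      omega
    have hsplit : ∑ i ∈ Finset.Ioc 0 m, gv i
        = ∑ i ∈ Finset.Ioc 0 (m-1), gv i + gv m := by
      have : m = (m-1) + 1 := by omega
      rw [this, Finset.sum_Ioc_succ_top (by omega)]
      congr 1 <;> omega
    have hcongr : ∑ i ∈ Finset.Ioc 0 (m-1), gv i = ∑ i ∈ Finset.Ioc 0 (m-1), gu i := by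
      apply Finset.sum_congr rfl
      intro i hi
      simp only [Finset.mem_Ioc] at hi
      simp only [hgv, hgu, hvdef, hgetD, if_pos (show i - 1 < p by omega), if_pos (show i < p by omega)]
    have hgvm : gv m = m := by
      have h1 : u.getD (m-1) 0 ∈ u := getD_mem u (m-1) (by omega)
      simp only [hgv, hvdef, hgetD]
      rw [if_pos (show m - 1 < p by omega), if_neg (show ¬ m < p by omega),
        if_pos (show m = p by omega), if_pos (hx _ h1)]
    rw [hmajv, hsplit, hcongr, hgvm, ← hmaju, if_neg hnotmem, hK]
    simp [hpm]
  · -- p < m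
    have h1 : ∑ i ∈ Finset.Ioc 0 p, gv i + ∑ i ∈ Finset.Ioc p m, gv i
        = ∑ i ∈ Finset.Ioc 0 m, gv i := Finset.sum_Ioc_consecutive _ (by omega) (by omega)
    have h2 : ∑ i ∈ Finset.Ioc p (p+1), gv i + ∑ i ∈ Finset.Ioc (p+1) m, gv i
        = ∑ i ∈ Finset.Ioc p m, gv i := Finset.sum_Ioc_consecutive _ (by omega) (by omega)
    have h3 : ∑ i ∈ Finset.Ioc p (p+1), gv i = gv (p+1) := by
      rw [Finset.sum_Ioc_succ_top (le_refl p)]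
      simp
    have h4 : gv (p+1) = 0 := by
      have hmem : u.getD p 0 ∈ u := getD_mem u p (by omega)
      simp only [hgv, hvdef, hgetD]
      rw [if_neg (show ¬ p + 1 - 1 < p by omega), if_pos (show p + 1 - 1 = p by omega),
        if_neg (show ¬ p + 1 < p by omega), if_neg (show ¬ p + 1 = p by omega)]
      rw [if_neg]
      simp only [not_lt]
      have : p + 1 - 1 = p := by omega
      rw [this]
      exact le_of_lt (hx _ hmem)
    have h5 : ∑ i ∈ Finset.Ioc (p+1) m, gv i
        = ∑ j ∈ Finset.Ioc p (m-1), gv (j+1) := by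
      have hmap : (Finset.Ioc p (m-1)).map (addRightEmbedding 1) = Finset.Ioc (p+1) m := by
        rw [Finset.map_add_right_Ioc]
        congr 1
        omega
      rw [← hmap, Finset.sum_map]
      rfl
    have h6 : ∀ j ∈ Finset.Ioc p (m-1),
        gv (j+1) = gu j + (if u.getD (j-1) 0 > u.getD j 0 then 1 else 0) := by
      intro j hj
      simp only [Finset.mem_Ioc] at hj
      simp only [hgv, hgu, hvdef, hgetD]
      rw [if_neg (show ¬ j + 1 - 1 < p by omega), if_neg (show ¬ j + 1 - 1 = p by omega),
        if_neg (show ¬ j + 1 < p by omega), if_neg (show ¬ j + 1 = p by omega)]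
      have e1 : j + 1 - 1 - 1 = j - 1 := by omega
      have e2 : j + 1 - 1 = j := by omega
      rw [e1, e2]
      by_cases hd : u.getD (j-1) 0 > u.getD j 0
      · rw [if_pos hd, if_pos hd, if_pos hd]
      · rw [if_neg hd, if_neg hd, if_neg hd]
    have h7 : ((ligne u).filter (fun j => p < j))
        = (Finset.Ioc p (m-1)).filter (fun j => u.getD (j-1) 0 > u.getD j 0) := by
      ext j
      simp only [ligne, Finset.mem_filter, Finset.mem_Icc, Finset.mem_Ioc]
      constructor
      · rintro ⟨⟨⟨hj1, hj2⟩, hd⟩, hpj⟩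
        exact ⟨⟨hpj, hj2⟩, hd⟩
      · rintro ⟨⟨hpj, hj2⟩, hd⟩
        exact ⟨⟨⟨by omega, hj2⟩, hd⟩, hpj⟩
    have h7' : ((ligne u).filter (fun j => p < j)).card
        = ∑ j ∈ Finset.Ioc p (m-1), (if u.getD (j-1) 0 > u.getD j 0 then 1 else 0) := by
      rw [h7, Finset.card_filter]
    have h8 : ∑ i ∈ Finset.Ioc 0 p, gv i + (if p ∈ ligne u then p else 0)
        = ∑ i ∈ Finset.Ioc 0 p, gu i + p := by
      rcases Nat.eq_zero_or_pos p with hp0 | hp1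
      · subst hp0
        simp [show (0:ℕ) ∉ ligne u from fun h => by
          have := ligne_subset u h
          simp [Finset.mem_Icc] at this]
      · have hsp : ∀ q : ℕ → ℕ, ∑ i ∈ Finset.Ioc 0 p, q i
            = ∑ i ∈ Finset.Ioc 0 (p-1), q i + q p := by
          intro q
          have : p = (p-1) + 1 := by omega
          rw [this, Finset.sum_Ioc_succ_top (by omega)]
          congr 2 <;> omega
        have hcong : ∑ i ∈ Finset.Ioc 0 (p-1), gv i = ∑ i ∈ Finset.Ioc 0 (p-1), gu i := by
          apply Finset.sum_congr rfl
          intro i hi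
          simp only [Finset.mem_Ioc] at hi
          simp only [hgv, hgu, hvdef, hgetD, if_pos (show i - 1 < p by omega), if_pos (show i < p by omega)]
        have hgvp : gv p = p := by
          have hmem : u.getD (p-1) 0 ∈ u := getD_mem u (p-1) (by omega)
          simp only [hgv, hvdef, hgetD]
          rw [if_pos (show p - 1 < p by omega), if_neg (show ¬ p < p by omega)]
          simp only [if_true, if_pos rfl]
          rw [if_pos (hx _ hmem)]
        have hgup : gu p = if p ∈ ligne u then p else 0 := by
          simp only [hgu, ligne, Finset.mem_filter, Finset.mem_Icc]
          by_cases hd : u.getD (p-1) 0 > u.getD p 0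
          · rw [if_pos hd, if_pos ⟨⟨by omega, by omega⟩, hd⟩]
          · rw [if_neg hd, if_neg (fun h => hd h.2)]
        rw [hsp gv, hsp gu, hcong, hgvp, hgup]
        by_cases hD : p ∈ ligne u <;> simp [hD] <;> omega
    have h9 : ∑ i ∈ Finset.Ioc 0 p, gu i + ∑ i ∈ Finset.Ioc p (m-1), gu i
        = ∑ i ∈ Finset.Ioc 0 (m-1), gu i := Finset.sum_Ioc_consecutive _ (by omega) (by omega)
    have h10 : ∑ j ∈ Finset.Ioc p (m-1), gv (j+1)
        = ∑ i ∈ Finset.Ioc p (m-1), gu i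
          + ∑ j ∈ Finset.Ioc p (m-1), (if u.getD (j-1) 0 > u.getD j 0 then 1 else 0) := by
      rw [← Finset.sum_add_distrib]
      exact Finset.sum_congr rfl h6
    rw [hmajv, ← h1, ← h2, h3, h4, h5, h10, hmaju, ← h9, h7']
    by_cases hD : p ∈ ligne u
    · have := h8
      rw [if_pos hD] at this
      rw [if_pos hD]
      omega
    · have := h8
      rw [if_neg hD] at this
      rw [if_neg hD]
      omega

lemma card_filter_ligne_le (u : List ℕ) (p : ℕ) :
    ((ligne u).filter (fun j => p < j)).card ≤ u.length - 1 + 1 - (p + 1) := by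
  have hsub : ((ligne u).filter (fun j => p < j)) ⊆ Finset.Icc (p+1) (u.length - 1) := by
    intro j hj
    rw [Finset.mem_filter] at hj
    have := ligne_subset u hj.1
    simp only [Finset.mem_Icc] at this ⊢
    omega
  calc ((ligne u).filter (fun j => p < j)).card
      ≤ (Finset.Icc (p+1) (u.length - 1)).card := Finset.card_le_card hsub
    _ = u.length - 1 + 1 - (p + 1) := Nat.card_Icc _ _

lemma maj_insL_ge (u : List ℕ) (x p : ℕ) (hp : p ≤ u.length) (hx : ∀ y ∈ u, x < y) :
    maj u ≤ maj (u.take p ++ x :: u.drop p) := by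
  rw [maj_insL u x p hp hx]; omega

lemma maj_insL_le (u : List ℕ) (x p : ℕ) (hp : p ≤ u.length) (hx : ∀ y ∈ u, x < y) :
    maj (u.take p ++ x :: u.drop p) ≤ maj u + u.length := by
  rw [maj_insL u x p hp hx]
  have h1 := card_filter_ligne_le u p
  by_cases hD : p ∈ ligne u
  · rw [if_pos hD]; omega
  · rw [if_neg hD]; omega

lemma maj_insL_inj (u : List ℕ) (x : ℕ) (hx : ∀ y ∈ u, x < y) {p q : ℕ}
    (hp : p ≤ u.length) (hq : q ≤ u.length)
    (h : maj (u.take p ++ x :: u.drop p) = maj (u.take q ++ x :: u.drop q)) : p = q := by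
  classical
  -- wlog style: prove for p < q a contradiction
  have key : ∀ p q : ℕ, p < q → q ≤ u.length →
      maj (u.take p ++ x :: u.drop p) ≠ maj (u.take q ++ x :: u.drop q) := by
    intro p q hpq hq'
    rw [maj_insL u x p (by omega) hx, maj_insL u x q hq' hx]
    set D := ligne u with hD
    set t := (D.filter (fun j => p < j ∧ j ≤ q)).card with ht
    have hsplit : (D.filter (fun j => p < j)).card
        = t + (D.filter (fun j => q < j)).card := by
      have e1 : (D.filter (fun j => p < j)).filter (fun j => j ≤ q)
          = D.filter (fun j => p < j ∧ j ≤ q) := Finset.filter_filter _ _ _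
      have e2 : (D.filter (fun j => p < j)).filter (fun j => ¬ j ≤ q)
          = D.filter (fun j => q < j) := by
        rw [Finset.filter_filter]
        apply Finset.filter_congr
        intro j _
        simp only [not_le, eq_iff_iff]
        constructor
        · rintro ⟨_, h2⟩; exact h2
        · intro h2; exact ⟨by omega, h2⟩
      rw [← Finset.card_filter_add_card_filter_not (s := D.filter (fun j => p < j))
        (p := fun j => j ≤ q), e1, e2]
    have hmemq : q ∈ D → 1 ≤ t := by
      intro hqD
      rw [ht]
      refine Finset.card_pos.mpr ⟨q, ?_⟩
      rw [Finset.mem_filter]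
      exact ⟨hqD, by omega, le_refl q⟩
    have hnotq : q ∉ D → t ≤ q - 1 + 1 - (p + 1) := by
      intro hqD
      have hsub : D.filter (fun j => p < j ∧ j ≤ q) ⊆ Finset.Icc (p+1) (q-1) := by
        intro j hj
        rw [Finset.mem_filter] at hj
        have hjq : j ≠ q := fun hjq => hqD (hjq ▸ hj.1)
        simp only [Finset.mem_Icc]
        omega
      calc t ≤ (Finset.Icc (p+1) (q-1)).card := Finset.card_le_card hsub
        _ = q - 1 + 1 - (p + 1) := Nat.card_Icc _ _
    by_cases hpD : p ∈ D <;> by_cases hqD : q ∈ D <;>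
      simp only [if_pos, if_neg, hpD, hqD, if_true, if_false]
    · have := hmemq hqD; omega
    · have := hnotq hqD; omega
    · have := hmemq hqD; omega
    · have := hnotq hqD; omega
  rcases lt_trichotomy p q with h1 | h1 | h1
  · exact absurd h (key p q h1 hq)
  · exact h1
  · exact absurd h.symm (key q p h1 hp)

lemma maj_insL_surj (u : List ℕ) (x : ℕ) (hx : ∀ y ∈ u, x < y) {c : ℕ} (hc : c ≤ u.length) :
    ∃ p ≤ u.length, maj (u.take p ++ x :: u.drop p) = maj u + c := by
  classical
  set m := u.length with hm
  set f : ℕ → ℕ := fun p => maj (u.take p ++ x :: u.drop p) with hf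
  have hinj : Set.InjOn f (Finset.range (m+1)) := by
    intro p hp q hq hpq
    simp only [Finset.coe_range, Set.mem_Iio] at hp hq
    exact maj_insL_inj u x hx (by omega) (by omega) hpq
  have hsub : (Finset.range (m+1)).image f ⊆ Finset.Icc (maj u) (maj u + m) := by
    intro y hy
    rw [Finset.mem_image] at hy
    obtain ⟨p, hp, rfl⟩ := hy
    rw [Finset.mem_range] at hp
    rw [Finset.mem_Icc]
    exact ⟨maj_insL_ge u x p (by omega) hx, maj_insL_le u x p (by omega) hx⟩
  have hcard : ((Finset.range (m+1)).image f).card = m + 1 := by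
    rw [Finset.card_image_of_injOn hinj, Finset.card_range]
  have heq : (Finset.range (m+1)).image f = Finset.Icc (maj u) (maj u + m) := by
    apply Finset.eq_of_subset_of_card_le hsub
    rw [hcard, Nat.card_Icc]
    omega
  have hmem : maj u + c ∈ (Finset.range (m+1)).image f := by
    rw [heq, Finset.mem_Icc]
    omega
  rw [Finset.mem_image] at hmem
  obtain ⟨p, hp, hpc⟩ := hmem
  rw [Finset.mem_range] at hp
  exact ⟨p, by omega, hpc⟩

lemma ligne_map (z : List ℕ) (f : ℕ → ℕ)
    (hf : ∀ a ∈ z, ∀ b ∈ z, (f b < f a ↔ b < a)) : ligne (z.map f) = ligne z := by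
  unfold ligne
  rw [List.length_map]
  apply Finset.filter_congr
  intro i hi
  simp only [Finset.mem_Icc] at hi
  have h1 : i - 1 < z.length := by omega
  have h2 : i < z.length := by omega
  rw [List.getD_eq_getElem (z.map f) 0 (by simpa using h1),
      List.getD_eq_getElem (z.map f) 0 (by simpa using h2),
      List.getD_eq_getElem z 0 h1, List.getD_eq_getElem z 0 h2,
      List.getElem_map, List.getElem_map]
  exact hf _ (z.getElem_mem _) _ (z.getElem_mem _)

lemma maj_map (z : List ℕ) (f : ℕ → ℕ)
    (hf : ∀ a ∈ z, ∀ b ∈ z, (f b < f a ↔ b < a)) : maj (z.map f) = maj z := by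
  unfold maj
  rw [ligne_map z f hf]

lemma split_min (z : List ℕ) (x : ℕ) (hmem : x ∈ z) (hcount : z.count x = 1)
    (hmin : ∀ y ∈ z, x ≤ y) :
    ∃ p ≤ (z.filter (fun y => x < y)).length,
      z = (z.filter (fun y => x < y)).take p ++ x :: (z.filter (fun y => x < y)).drop p := by
  obtain ⟨a, b, rfl⟩ := List.append_of_mem hmem
  have hxa : x ∉ a := by
    intro hxa
    have : 1 ≤ a.count x := List.count_pos_iff.mpr hxa
    rw [List.count_append, List.count_cons_self] at hcount
    omega
  have hxb : x ∉ b := by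
    intro hxb
    have : 1 ≤ b.count x := List.count_pos_iff.mpr hxb
    rw [List.count_append, List.count_cons_self] at hcount
    omega
  have hfa : a.filter (fun y => x < y) = a := by
    apply List.filter_eq_self.mpr
    intro y hy
    have h1 := hmin y (by simp [hy])
    have h2 : y ≠ x := fun h => hxa (h ▸ hy)
    simpa using by omega
  have hfb : b.filter (fun y => x < y) = b := by
    apply List.filter_eq_self.mpr
    intro y hy
    have h1 := hmin y (by simp [hy])
    have h2 : y ≠ x := fun h => hxb (h ▸ hy)
    simpa using by omega
  have hfz : (a ++ x :: b).filter (fun y => x < y) = a ++ b := by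
    rw [List.filter_append, List.filter_cons, hfa, hfb]
    simp
  refine ⟨a.length, ?_, ?_⟩
  · rw [hfz]; simp
  · rw [hfz, List.take_left, List.drop_left]

def IsPermWord' (n : ℕ) (w : List ℕ) : Prop := w.Perm (List.range' 1 n)

lemma permword_length {n : ℕ} {w : List ℕ} (h : IsPermWord' n w) : w.length = n := by
  rw [h.length_eq, List.length_range']

lemma permword_mem {n : ℕ} {w : List ℕ} (h : IsPermWord' n w) :
    ∀ y ∈ w, 1 ≤ y ∧ y ≤ n := by
  intro y hy
  have := h.mem_iff.mp hy
  rw [List.mem_range'_1] at this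
  omega

lemma permword_count {n : ℕ} {w : List ℕ} (h : IsPermWord' n w) {y : ℕ}
    (h1 : 1 ≤ y) (h2 : y ≤ n) : w.count y = 1 := by
  rw [h.count_eq]
  exact List.count_eq_one_of_mem List.nodup_range' (List.mem_range'_1.mpr ⟨h1, by omega⟩)

lemma permword_mem_of {n : ℕ} {w : List ℕ} (h : IsPermWord' n w) {y : ℕ}
    (h1 : 1 ≤ y) (h2 : y ≤ n) : y ∈ w := by
  rw [h.mem_iff, List.mem_range'_1]
  omega

lemma filter_range' (n i : ℕ) (hi : i ≤ n) :
    (List.range' 1 n).filter (fun y => i+1 ≤ y) = List.range' (i+1) (n-i) := by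
  have hsplit : List.range' 1 i ++ List.range' (1+i) (n-i) = List.range' 1 n := by
    have := @List.range'_append 1 i (n-i) 1
    simp only [one_mul] at this
    rw [this]
    congr 1
    omega
  rw [← hsplit, List.filter_append]
  have e1 : (List.range' 1 i).filter (fun y => i+1 ≤ y) = [] := by
    apply List.filter_eq_nil_iff.mpr
    intro y hy
    rw [List.mem_range'_1] at hy
    simpa using by omega
  have e2 : (List.range' (1+i) (n-i)).filter (fun y => i+1 ≤ y) = List.range' (1+i) (n-i) := by
    apply List.filter_eq_self.mpr
    intro y hy
    rw [List.mem_range'_1] at hy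
    simpa using by omega
  rw [e1, e2, List.nil_append]
  congr 1
  omega

lemma length_filter_permword {n : ℕ} {w : List ℕ} (h : IsPermWord' n w) {i : ℕ} (hi : i ≤ n) :
    (w.filter (fun y => i+1 ≤ y)).length = n - i := by
  rw [(h.filter (fun y => i+1 ≤ y)).length_eq, filter_range' n i hi, List.length_range']

lemma map_sub_range' (s k : ℕ) :
    (List.range' (s+1) k).map (fun y => y - 1) = List.range' s k := by
  induction k generalizing s with
  | zero => rfl
  | succ k ih =>
    rw [List.range'_succ, List.range'_succ, List.map_cons, ih (s+1)]
    simp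

lemma filter_succ_succ (w : List ℕ) (i : ℕ) :
    (w.filter (fun x => i+1 ≤ x)).filter (fun y => i+1 < y)
      = w.filter (fun x => i+2 ≤ x) := by
  rw [List.filter_filter]
  apply List.filter_congr
  intro a _
  rcases Nat.lt_or_ge a (i+2) with h' | h'
  · simp [Nat.not_le.mpr h', show ¬ i+1 < a by omega]
  · simp [show i+2 ≤ a from h', show i+1 < a by omega, show i+1 ≤ a by omega]

lemma filter_succ_split {n : ℕ} {w : List ℕ} (h : IsPermWord' n w) {i : ℕ} (hi : i < n) :
    ∃ p ≤ n - (i+1),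
      w.filter (fun x => i+1 ≤ x) =
        (w.filter (fun x => i+2 ≤ x)).take p ++ (i+1) :: (w.filter (fun x => i+2 ≤ x)).drop p := by
  set A := w.filter (fun x => i+1 ≤ x) with hA
  have hmemA : (i+1) ∈ A := by
    rw [hA, List.mem_filter]
    exact ⟨permword_mem_of h (by omega) (by omega), by simp⟩
  have hcount : A.count (i+1) = 1 := by
    rw [hA, List.count_filter (by simp)]
    exact permword_count h (by omega) (by omega)
  have hmin : ∀ y ∈ A, i+1 ≤ y := by
    intro y hy
    rw [hA, List.mem_filter] at hy
    simpa using hy.2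
  obtain ⟨p, hp, hrep⟩ := split_min A (i+1) hmemA hcount hmin
  rw [filter_succ_succ] at hp hrep
  have hlen : (w.filter (fun x => i+2 ≤ x)).length = n - (i+1) :=
    length_filter_permword h (by omega)
  exact ⟨p, by omega, hrep⟩

lemma mem_filter_succ_gt (w : List ℕ) (i : ℕ) :
    ∀ y ∈ w.filter (fun x => i+2 ≤ x), i+1 < y := by
  intro y hy
  rw [List.mem_filter] at hy
  have := hy.2
  simp at this
  omega

lemma step_le {n : ℕ} {w : List ℕ} (h : IsPermWord' n w) {i : ℕ} (hi : i < n) :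
    maj (w.filter (fun x => i+2 ≤ x)) ≤ maj (w.filter (fun x => i+1 ≤ x)) ∧
    maj (w.filter (fun x => i+1 ≤ x)) ≤ maj (w.filter (fun x => i+2 ≤ x)) + (n - (i+1)) := by
  obtain ⟨p, hp, hrep⟩ := filter_succ_split h hi
  have hlen : (w.filter (fun x => i+2 ≤ x)).length = n - (i+1) :=
    length_filter_permword h (by omega)
  have hgt := mem_filter_succ_gt w i
  constructor
  · rw [hrep]
    exact maj_insL_ge _ _ _ (by omega) hgt
  · rw [hrep]
    have := maj_insL_le (w.filter (fun x => i+2 ≤ x)) (i+1) p (by omega) hgt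
    omega

lemma filter_big {n : ℕ} {w : List ℕ} (h : IsPermWord' n w) {i : ℕ} (hi : n ≤ i) :
    w.filter (fun x => i+1 ≤ x) = [] := by
  apply List.filter_eq_nil_iff.mpr
  intro y hy
  have := permword_mem h y hy
  simpa using by omega

lemma filter_one {n : ℕ} {w : List ℕ} (h : IsPermWord' n w) :
    w.filter (fun x => 0+1 ≤ x) = w := by
  apply List.filter_eq_self.mpr
  intro y hy
  have := permword_mem h y hy
  simpa using by omega

lemma tele (g : ℕ → ℕ) (n : ℕ) (h : ∀ i < n, g (i+1) ≤ g i) :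
    (∑ i ∈ Finset.range n, (g i - g (i+1))) = g 0 - g n ∧ g n ≤ g 0 := by
  induction n with
  | zero => simp
  | succ n ih =>
    obtain ⟨h1, h2⟩ := ih (fun i hi => h i (by omega))
    have h3 := h n (by omega)
    rw [Finset.sum_range_succ, h1]
    omega

lemma filter_pred_congr (w : List ℕ) {a b : ℕ} (hab : a = b) :
    w.filter (fun x => a ≤ x) = w.filter (fun x => b ≤ x) := by rw [hab]

lemma mc_length (w : List ℕ) : (mc w).length = w.length := by simp [mc]

lemma mc_getD (w : List ℕ) (i : ℕ) (hi : i < w.length) :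
    (mc w).getD i 0
      = maj (w.filter (fun x => i+1 ≤ x)) - maj (w.filter (fun x => i+2 ≤ x)) := by
  rw [List.getD_eq_getElem _ _ (by rw [mc_length]; exact hi)]
  unfold mc
  rw [List.getElem_map]
  congr 1 <;> rw [List.getElem_range]

lemma mc_sum {n : ℕ} {w : List ℕ} (h : IsPermWord' n w) : (mc w).sum = maj w := by
  have hlen := permword_length h
  have hsum : (mc w).sum = ∑ i ∈ Finset.range w.length,
      (maj (w.filter (fun x => i+1 ≤ x)) - maj (w.filter (fun x => i+2 ≤ x))) := rfl
  set g : ℕ → ℕ := fun i => maj (w.filter (fun x => i+1 ≤ x)) with hg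
  have hmono : ∀ i < n, g (i+1) ≤ g i := by
    intro i hi
    have h1 := (step_le h hi).1
    have e : w.filter (fun x => i+1+1 ≤ x) = w.filter (fun x => i+2 ≤ x) :=
      filter_pred_congr w (by omega)
    simp only [hg, e]
    exact h1
  have htele := tele g n hmono
  have hsum2 : (mc w).sum = ∑ i ∈ Finset.range n, (g i - g (i+1)) := by
    rw [hsum, hlen]
  have hg0 : g 0 = maj w := by simp only [hg]; rw [filter_one h]
  have hgn : g n = 0 := by
    simp only [hg]
    rw [filter_big h (le_refl n)]
    rfl
  rw [hsum2, htele.1, hg0, hgn]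
  omega

lemma mc_subdiagonal {n : ℕ} {w : List ℕ} (h : IsPermWord' n w) : Subdiagonal (mc w) := by
  intro i hi
  rw [mc_length] at hi
  have hlen := permword_length h
  rw [mc_length, mc_getD w i hi]
  have hi' : i < n := by omega
  have h2 := (step_le h hi').2
  omega

lemma map_sub_add (u : List ℕ) (hu : ∀ y ∈ u, 1 ≤ y) :
    (u.map (fun y => y - 1)).map (fun y => y + 1) = u := by
  rw [List.map_map]
  have h2 : ∀ y ∈ u, ((fun y => y + 1) ∘ fun y => y - 1) y = id y := by
    intro y hy
    have := hu y hy
    simp only [Function.comp_apply, id]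
    omega
  rw [List.map_congr_left h2, List.map_id]

lemma tail_filter_eq {w : List ℕ} (hw : ∀ y ∈ w, 1 ≤ y) (j : ℕ) (hj : 1 ≤ j) :
    ((w.filter (fun x => 2 ≤ x)).map (fun y => y - 1)).filter (fun x => j ≤ x)
      = (w.filter (fun x => j+1 ≤ x)).map (fun y => y - 1) := by
  rw [List.filter_map, List.filter_filter]
  congr 1
  apply List.filter_congr
  intro a ha
  have h1 := hw a ha
  show (decide (j ≤ a - 1) && decide (2 ≤ a)) = decide (j+1 ≤ a)
  rcases Nat.lt_or_ge a (j+1) with h' | h'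
  · simp [show ¬ (j ≤ a - 1) by omega, show ¬ (j+1 ≤ a) by omega]
  · simp [show j ≤ a - 1 by omega, show 2 ≤ a by omega, show j+1 ≤ a from h']

lemma tail_maj_eq {w : List ℕ} (hw : ∀ y ∈ w, 1 ≤ y) (j : ℕ) (hj : 1 ≤ j) :
    maj (((w.filter (fun x => 2 ≤ x)).map (fun y => y - 1)).filter (fun x => j ≤ x))
      = maj (w.filter (fun x => j+1 ≤ x)) := by
  rw [tail_filter_eq hw j hj]
  apply maj_map
  intro a ha b hb
  rw [List.mem_filter] at ha hb
  have ha2 : j + 1 ≤ a := by simpa using ha.2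
  have hb2 : j + 1 ≤ b := by simpa using hb.2
  omega

lemma mc_cons {n : ℕ} {w : List ℕ} (h : IsPermWord' (n+1) w) :
    mc w = (maj w - maj (w.filter (fun x => 2 ≤ x))) ::
      mc ((w.filter (fun x => 2 ≤ x)).map (fun y => y - 1)) := by
  have hw1 : ∀ y ∈ w, 1 ≤ y := fun y hy => (permword_mem h y hy).1
  have hlen := permword_length h
  set u' : List ℕ := (w.filter (fun x => 2 ≤ x)).map (fun y => y - 1) with hu'
  have hulen : (w.filter (fun x => 2 ≤ x)).length = n := by
    have := length_filter_permword h (i := 1) (by omega)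
    simpa using this
  have hu'len : u'.length = n := by rw [hu', List.length_map, hulen]
  have e1 : mc w = (List.range (n+1)).map
      (fun i => maj (w.filter (fun x => i+1 ≤ x)) - maj (w.filter (fun x => i+2 ≤ x))) := by
    rw [mc, hlen]
  rw [e1, List.range_succ_eq_map, List.map_cons, List.map_map]
  congr 1
  · show maj (w.filter (fun x => 0+1 ≤ x)) - maj (w.filter (fun x => 0+2 ≤ x)) = _
    rw [filter_one h]
  · rw [mc, hu'len]
    apply List.map_congr_left
    intro i _
    simp only [Function.comp]
    have e2 := tail_maj_eq hw1 (i+1) (by omega)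
    have e3 := tail_maj_eq hw1 (i+2) (by omega)
    rw [← hu'] at e2 e3
    rw [e2, e3]

lemma permword_tail {n : ℕ} {w : List ℕ} (h : IsPermWord' (n+1) w) :
    IsPermWord' n ((w.filter (fun x => 2 ≤ x)).map (fun y => y - 1)) := by
  have h2 : (w.filter (fun x => 2 ≤ x)).Perm ((List.range' 1 (n+1)).filter (fun x => 2 ≤ x)) :=
    h.filter _
  have h3 : (List.range' 1 (n+1)).filter (fun x => 2 ≤ x) = List.range' 2 n := by
    have := filter_range' (n+1) 1 (by omega)
    simpa using this
  rw [h3] at h2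
  have h4 := h2.map (fun y => y - 1)
  have h5 : (List.range' 2 n).map (fun y => y - 1) = List.range' 1 n := map_sub_range' 1 n
  rw [h5] at h4
  exact h4

lemma map_add_one_range' (s k : ℕ) :
    (List.range' s k).map (fun y => y + 1) = List.range' (s+1) k := by
  induction k generalizing s with
  | zero => rfl
  | succ k ih =>
    rw [List.range'_succ, List.range'_succ, List.map_cons, ih (s+1)]

lemma mc_inj : ∀ (n : ℕ) (w w' : List ℕ), IsPermWord' n w → IsPermWord' n w' →
    mc w = mc w' → w = w' := by
  intro n
  induction n with
  | zero =>
    intro w w' h h' _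
    have h1 := permword_length h
    have h2 := permword_length h'
    rw [List.length_eq_zero_iff] at h1 h2
    rw [h1, h2]
  | succ n ih =>
    intro w w' h h' hmc
    have hw1 : ∀ y ∈ w, 1 ≤ y := fun y hy => (permword_mem h y hy).1
    have hw1' : ∀ y ∈ w', 1 ≤ y := fun y hy => (permword_mem h' y hy).1
    rw [mc_cons h, mc_cons h'] at hmc
    have hhead := List.head_eq_of_cons_eq hmc
    have htail := List.tail_eq_of_cons_eq hmc
    have htaileq := ih _ _ (permword_tail h) (permword_tail h') htail
    have hueq : w.filter (fun x => 2 ≤ x) = w'.filter (fun x => 2 ≤ x) := by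
      have e1 := map_sub_add (w.filter (fun x => 2 ≤ x))
        (fun y hy => hw1 y (List.mem_of_mem_filter hy))
      have e2 := map_sub_add (w'.filter (fun x => 2 ≤ x))
        (fun y hy => hw1' y (List.mem_of_mem_filter hy))
      rw [← e1, ← e2, htaileq]
    set u := w.filter (fun x => 2 ≤ x) with hu
    have hgt : ∀ y ∈ u, 1 < y := by
      intro y hy
      rw [hu, List.mem_filter] at hy
      exact (by simpa using hy.2 : 2 ≤ y)
    obtain ⟨p, hp, hrep⟩ := filter_succ_split h (i := 0) (by omega)
    obtain ⟨q, hq, hrep'⟩ := filter_succ_split h' (i := 0) (by omega)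
    rw [filter_one h] at hrep
    rw [filter_one h'] at hrep'
    rw [← hueq] at hrep'
    have hulen : u.length = n := by
      rw [hu]
      have := length_filter_permword h (i := 1) (by omega)
      simpa using this
    have hmaj1 := maj_insL_ge u 1 p (by omega) hgt
    have hmaj2 := maj_insL_ge u 1 q (by omega) hgt
    rw [← hrep] at hmaj1
    rw [← hrep'] at hmaj2
    rw [← hueq] at hhead
    have hmajeq : maj w = maj w' := by
      have := hhead
      omega
    have : p = q := by
      apply maj_insL_inj u 1 hgt (by omega) (by omega)
      rw [← hrep, ← hrep', hmajeq]
    rw [hrep, hrep', this]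

lemma mc_surj : ∀ (n : ℕ) (d : List ℕ), d.length = n → Subdiagonal d →
    ∃ w, IsPermWord' n w ∧ mc w = d := by
  intro n
  induction n with
  | zero =>
    intro d hlen _
    rw [List.length_eq_zero_iff] at hlen
    exact ⟨[], List.Perm.refl _, by rw [hlen]; rfl⟩
  | succ n ih =>
    intro d hlen hsub
    rcases d with _ | ⟨d₀, d'⟩
    · simp at hlen
    have hd'len : d'.length = n := by simpa using hlen
    have hd'sub : Subdiagonal d' := by
      intro i hi
      have := hsub (i+1) (by simpa using by omega)
      simp only [List.getD_cons_succ] at this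
      simp only [List.length_cons] at this
      omega
    have hd₀ : d₀ ≤ n := by
      have := hsub 0 (by simp)
      simp only [List.getD_cons_zero, List.length_cons] at this
      omega
    obtain ⟨w', hw', hmcw'⟩ := ih d' hd'len hd'sub
    set u : List ℕ := w'.map (fun y => y + 1) with hu
    have hulen : u.length = n := by rw [hu, List.length_map, permword_length hw']
    have huperm : u.Perm (List.range' 2 n) := by
      have := (hw'.map (fun y => y + 1))
      rwa [map_add_one_range' 1 n] at this
    have hgt : ∀ y ∈ u, 1 < y := by
      intro y hy
      rw [hu, List.mem_map] at hy
      obtain ⟨z, hz, rfl⟩ := hy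
      have := (permword_mem hw' z hz).1
      omega
    obtain ⟨p, hp, hmaj⟩ := maj_insL_surj u 1 hgt (c := d₀) (by omega)
    set w : List ℕ := u.take p ++ 1 :: u.drop p with hw
    have hperm : IsPermWord' (n+1) w := by
      have h1 : w.Perm (1 :: (u.take p ++ u.drop p)) := List.perm_middle
      rw [List.take_append_drop] at h1
      have h2 : (1 :: u).Perm (1 :: List.range' 2 n) := huperm.cons 1
      have h3 : List.range' 1 (n+1) = 1 :: List.range' 2 n := by
        rw [List.range'_succ]
      rw [← h3] at h2
      exact h1.trans h2
    have hfil : w.filter (fun x => 2 ≤ x) = u := by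
      rw [hw, List.filter_append, List.filter_cons]
      have e1 : (u.take p).filter (fun x => 2 ≤ x) = u.take p :=
        List.filter_eq_self.mpr (fun a ha => by
          have := hgt a (List.mem_of_mem_take ha)
          simpa using by omega)
      have e2 : (u.drop p).filter (fun x => 2 ≤ x) = u.drop p :=
        List.filter_eq_self.mpr (fun a ha => by
          have := hgt a (List.mem_of_mem_drop ha)
          simpa using by omega)
      rw [e1, e2]
      simp
    refine ⟨w, hperm, ?_⟩
    rw [mc_cons hperm, hfil]
    have hmapback : u.map (fun y => y - 1) = w' := by
      rw [hu, List.map_map]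
      have : ∀ y ∈ w', ((fun y => y - 1) ∘ fun y => y + 1) y = id y := by
        intro y _
        simp
      rw [List.map_congr_left this, List.map_id]
    rw [hmapback, hmcw']
    congr 1
    omega

end McAux

theorem stmt9 (n : ℕ) :
    Set.BijOn mc {w | IsPermWord n w} {w | w.length = n ∧ Subdiagonal w} ∧
      ∀ w : List ℕ, IsPermWord n w → (mc w).sum = maj w := by
  constructor
  · refine ⟨?_, ?_, ?_⟩
    · intro w hw
      simp only [Set.mem_setOf_eq] at hw ⊢
      have hw' : IsPermWord' n w := hw
      exact ⟨by rw [mc_length, permword_length hw'], mc_subdiagonal hw'⟩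
    · intro w hw w' hw2 hmc
      simp only [Set.mem_setOf_eq] at hw hw2
      exact mc_inj n w w' hw hw2 hmc
    · intro d hd
      simp only [Set.mem_setOf_eq] at hd
      obtain ⟨w, h1, h2⟩ := mc_surj n d hd.1 hd.2
      exact ⟨w, h1, h2⟩
  · intro w hw
    have hw' : IsPermWord' n w := hw
    exact mc_sum hw'
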